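/- The Jerison–Lee bubble U(z,t) = (t² + (1+|z|²)²)^{−1/2} is a positive solution of the CR Yamabe equation on the Heisenberg group: for every (z,t) ∈ ℂ×ℝ, X(X U)(z,t) + Y(Y U)(z,t) = −4·U(z,t)³, i.e. −Δ_H U = 4U³ where Δ_H = X² + Y² is the (unnormalized) sublaplacian of H¹. -/

import Mathlib

open MeasureTheory Real

/-- The left-invariant Heisenberg vector field `X f = ∂f/∂x + 2y ∂f/∂t`
acting on functions on `ℂ × ℝ` (coordinates `z = x + iy`, `t`). -/
noncomputable def heisX (f : ℂ × ℝ → ℝ) (p : ℂ × ℝ) : ℝ :=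
  fderiv ℝ f p ((1 : ℂ), (0 : ℝ)) + 2 * p.1.im * fderiv ℝ f p ((0 : ℂ), (1 : ℝ))

/-- The left-invariant Heisenberg vector field `Y f = ∂f/∂y − 2x ∂f/∂t`. -/
noncomputable def heisY (f : ℂ × ℝ → ℝ) (p : ℂ × ℝ) : ℝ :=
  fderiv ℝ f p (Complex.I, (0 : ℝ)) - 2 * p.1.re * fderiv ℝ f p ((0 : ℂ), (1 : ℝ))

/-- The Jerison–Lee bubble `U(z,t) = (t² + (1+|z|²)²)^{-1/2}` on `H¹ = ℂ × ℝ`. -/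
noncomputable def jerisonLeeBubble (p : ℂ × ℝ) : ℝ :=
  (p.2 ^ 2 + (1 + ‖p.1‖ ^ 2) ^ 2) ^ (-(1 / 2 : ℝ))

namespace JLAux

noncomputable def reL : ℂ × ℝ →L[ℝ] ℝ := Complex.reCLM.comp (ContinuousLinearMap.fst ℝ ℂ ℝ)
noncomputable def imL : ℂ × ℝ →L[ℝ] ℝ := Complex.imCLM.comp (ContinuousLinearMap.fst ℝ ℂ ℝ)
noncomputable def tL : ℂ × ℝ →L[ℝ] ℝ := ContinuousLinearMap.snd ℝ ℂ ℝ

@[simp] lemma reL_apply (v : ℂ × ℝ) : reL v = v.1.re := rfl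
@[simp] lemma imL_apply (v : ℂ × ℝ) : imL v = v.1.im := rfl
@[simp] lemma tL_apply (v : ℂ × ℝ) : tL v = v.2 := rfl

def wf (p : ℂ × ℝ) : ℝ := 1 + p.1.re * p.1.re + p.1.im * p.1.im
def Dd (p : ℂ × ℝ) : ℝ := p.2 * p.2 + wf p * wf p
def Af (p : ℂ × ℝ) : ℝ := p.1.re * wf p + p.1.im * p.2
def Bf (p : ℂ × ℝ) : ℝ := p.1.im * wf p - p.1.re * p.2

lemma Dpos (p : ℂ × ℝ) : 0 < Dd p := by
  unfold Dd wf
  nlinarith [sq_nonneg p.2, sq_nonneg p.1.re, sq_nonneg p.1.im,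
    sq_nonneg (p.1.re * p.1.im)]

lemma hre (p : ℂ × ℝ) : HasFDerivAt (fun q : ℂ × ℝ => q.1.re) reL p := reL.hasFDerivAt
lemma him (p : ℂ × ℝ) : HasFDerivAt (fun q : ℂ × ℝ => q.1.im) imL p := imL.hasFDerivAt
lemma ht (p : ℂ × ℝ) : HasFDerivAt (fun q : ℂ × ℝ => q.2) tL p := tL.hasFDerivAt

noncomputable def LW (p : ℂ × ℝ) : ℂ × ℝ →L[ℝ] ℝ :=
  (2 * p.1.re) • reL + (2 * p.1.im) • imL

lemma hW (p : ℂ × ℝ) : HasFDerivAt wf (LW p) p := by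
  have h := ((hasFDerivAt_const (1 : ℝ) p).add ((hre p).mul (hre p))).add
    ((him p).mul (him p))
  refine h.congr_fderiv ?_
  refine ContinuousLinearMap.ext fun v => ?_
  simp [LW]
  ring

noncomputable def LD (p : ℂ × ℝ) : ℂ × ℝ →L[ℝ] ℝ :=
  (2 * p.2) • tL + (4 * wf p * p.1.re) • reL + (4 * wf p * p.1.im) • imL

lemma hD (p : ℂ × ℝ) : HasFDerivAt Dd (LD p) p := by
  have h := (((ht p).mul (ht p)).add ((hW p).mul (hW p)))
  refine h.congr_fderiv ?_
  refine ContinuousLinearMap.ext fun v => ?_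
  simp [LD, LW]
  ring

lemma hpow (c : ℝ) (p : ℂ × ℝ) :
    HasFDerivAt (fun q => Dd q ^ c) ((c * Dd p ^ (c - 1)) • LD p) p :=
  (hD p).rpow_const (Or.inl (Dpos p).ne')

noncomputable def LA (p : ℂ × ℝ) : ℂ × ℝ →L[ℝ] ℝ :=
  (wf p + 2 * p.1.re * p.1.re) • reL + (2 * p.1.re * p.1.im + p.2) • imL + p.1.im • tL

lemma hA (p : ℂ × ℝ) : HasFDerivAt Af (LA p) p := by
  have h := (((hre p).mul (hW p)).add ((him p).mul (ht p)))
  refine h.congr_fderiv ?_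
  refine ContinuousLinearMap.ext fun v => ?_
  simp [LA, LW]
  ring

noncomputable def LB (p : ℂ × ℝ) : ℂ × ℝ →L[ℝ] ℝ :=
  (2 * p.1.re * p.1.im - p.2) • reL + (wf p + 2 * p.1.im * p.1.im) • imL + (-p.1.re) • tL

lemma hB (p : ℂ × ℝ) : HasFDerivAt Bf (LB p) p := by
  have h := (((him p).mul (hW p)).sub ((hre p).mul (ht p)))
  refine h.congr_fderiv ?_
  refine ContinuousLinearMap.ext fun v => ?_
  simp [LB, LW]
  ring

lemma UB_eq : jerisonLeeBubble = fun p => Dd p ^ (-(1 / 2 : ℝ)) := by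
  funext p
  unfold jerisonLeeBubble Dd wf
  congr 1
  have : ‖p.1‖ ^ 2 = p.1.re * p.1.re + p.1.im * p.1.im := by
    simp [Complex.sq_norm, Complex.normSq_apply]
  rw [this]; ring

lemma heisX_pow (c : ℝ) (p : ℂ × ℝ) :
    heisX (fun q => Dd q ^ c) p = 4 * c * Af p * Dd p ^ (c - 1) := by
  unfold heisX
  rw [(hpow c p).fderiv]
  simp [LD, Af]
  ring

lemma heisY_pow (c : ℝ) (p : ℂ × ℝ) :
    heisY (fun q => Dd q ^ c) p = 4 * c * Bf p * Dd p ^ (c - 1) := by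
  unfold heisY
  rw [(hpow c p).fderiv]
  simp [LD, Bf]
  ring

lemma heisXU : heisX jerisonLeeBubble = fun p => -2 * Af p * Dd p ^ (-(3 / 2 : ℝ)) := by
  funext p
  rw [UB_eq, heisX_pow]
  norm_num

lemma heisYU : heisY jerisonLeeBubble = fun p => -2 * Bf p * Dd p ^ (-(3 / 2 : ℝ)) := by
  funext p
  rw [UB_eq, heisY_pow]
  norm_num

lemma heisXXU (p : ℂ × ℝ) :
    heisX (heisX jerisonLeeBubble) p =
      -2 * (wf p + 2 * p.1.re * p.1.re + 2 * p.1.im * p.1.im) * Dd p ^ (-(3 / 2 : ℝ))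
        + 12 * Af p ^ 2 * Dd p ^ (-(5 / 2 : ℝ)) := by
  rw [heisXU]
  unfold heisX
  rw [HasFDerivAt.fderiv (f := fun p => -2 * Af p * Dd p ^ (-(3 / 2 : ℝ))) (((hA p).const_mul (-2)).mul (hpow (-(3 / 2)) p))]
  have e : (-(3 / 2 : ℝ) - 1) = -(5 / 2 : ℝ) := by norm_num
  simp [LA, LD, e, Af]
  ring

lemma heisYYU (p : ℂ × ℝ) :
    heisY (heisY jerisonLeeBubble) p =
      -2 * (wf p + 2 * p.1.re * p.1.re + 2 * p.1.im * p.1.im) * Dd p ^ (-(3 / 2 : ℝ))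
        + 12 * Bf p ^ 2 * Dd p ^ (-(5 / 2 : ℝ)) := by
  rw [heisYU]
  unfold heisY
  rw [HasFDerivAt.fderiv (f := fun p => -2 * Bf p * Dd p ^ (-(3 / 2 : ℝ))) (((hB p).const_mul (-2)).mul (hpow (-(3 / 2)) p))]
  have e : (-(3 / 2 : ℝ) - 1) = -(5 / 2 : ℝ) := by norm_num
  simp [LB, LD, e, Bf]
  ring

end JLAux

open JLAux in
/-- The Jerison–Lee bubble is a positive solution of the CR Yamabe
equation on the Heisenberg group: `X(XU) + Y(YU) = −4 U³`, i.e. `−Δ_H U = 4U³`. -/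
theorem jerisonLeeBubble_solves_CR_Yamabe :
    ∀ p : ℂ × ℝ,
      0 < jerisonLeeBubble p ∧
      heisX (heisX jerisonLeeBubble) p + heisY (heisY jerisonLeeBubble) p
        = -4 * (jerisonLeeBubble p) ^ 3 := by
  intro p
  have hDpos := Dpos p
  constructor
  · rw [UB_eq]
    exact Real.rpow_pos_of_pos hDpos _
  · rw [heisXXU, heisYYU, UB_eq]
    have hU3 : ((Dd p ^ (-(1 / 2 : ℝ))) ^ 3 : ℝ) = Dd p ^ (-(3 / 2 : ℝ)) := by
      rw [← Real.rpow_natCast (Dd p ^ (-(1 / 2 : ℝ))) 3, ← Real.rpow_mul hDpos.le]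
      norm_num
    have h52 : Dd p ^ (-(5 / 2 : ℝ)) = Dd p ^ (-(3 / 2 : ℝ)) / Dd p := by
      have e : (-(5 / 2 : ℝ)) = -(3 / 2 : ℝ) - 1 := by norm_num
      rw [e, Real.rpow_sub hDpos, Real.rpow_one]
    have hA2B2 : Af p ^ 2 + Bf p ^ 2 = (wf p - 1) * Dd p := by
      unfold Af Bf Dd; unfold wf; ring
    simp only [hU3, h52]
    set s := Dd p ^ (-(3 / 2 : ℝ)) with hs
    have key : 12 * Af p ^ 2 * (s / Dd p) + 12 * Bf p ^ 2 * (s / Dd p)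
        = 12 * (wf p - 1) * s := by
      field_simp
      linear_combination s * hA2B2
    have hw' : wf p = 1 + p.1.re * p.1.re + p.1.im * p.1.im := rfl
    linear_combination key + (8 * s) * hw'
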